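/- Let M be the block matrix [[A, p·J_{m,n}], [q·J_{n,m}, B]] where A ∈ R^{m×m} and B ∈ R^{n×n} are invertible, J_{m,n} is the all-ones m×n matrix, and p, q are real scalars. Then det M = det A · det B − p·q · (sum of all entries of adj A) · (sum of all entries of adj B). -/

import Mathlib

private lemma sum_helper {k : ℕ} (M : Matrix (Fin k) (Fin k) ℝ) (a b : ℝ) :
    ∑ i, (∑ j, a * M j i) * b = a * b * ∑ i, ∑ j, M i j := by
  have h : ∑ i, (∑ j, a * M j i) * b = ∑ i, ∑ j, a * b * M j i := by
    refine Finset.sum_congr rfl fun i _ => ?_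
    rw [Finset.sum_mul]
    exact Finset.sum_congr rfl fun j _ => by ring
  rw [h, Finset.sum_comm, Finset.mul_sum]
  exact Finset.sum_congr rfl fun i _ => by rw [Finset.mul_sum]

theorem stmt_2 (m n : ℕ) (A : Matrix (Fin m) (Fin m) ℝ) (B : Matrix (Fin n) (Fin n) ℝ)
    (p q : ℝ) (hA : IsUnit A.det) (hB : IsUnit B.det) :
    (Matrix.fromBlocks A
      (Matrix.of fun (_ : Fin m) (_ : Fin n) => p)
      (Matrix.of fun (_ : Fin n) (_ : Fin m) => q) B).det
      = A.det * B.det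
        - p * q * (∑ i, ∑ j, A.adjugate i j) * (∑ i, ∑ j, B.adjugate i j) := by
  haveI := A.invertibleOfIsUnitDet hA
  set sA : ℝ := ∑ i, ∑ j, A⁻¹ i j with hsA
  set sB : ℝ := ∑ i, ∑ j, B⁻¹ i j with hsB
  rw [Matrix.det_fromBlocks₁₁]
  have hinv : (⅟A : Matrix _ _ ℝ) = A⁻¹ := Matrix.invOf_eq_nonsing_inv A
  have key : B - (Matrix.of fun (_ : Fin n) (_ : Fin m) => q) * ⅟A *
        (Matrix.of fun (_ : Fin m) (_ : Fin n) => p)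
      = B + Matrix.replicateCol (Fin 1) (fun _ => -(p * q * sA)) *
          Matrix.replicateRow (Fin 1) (fun _ => (1 : ℝ)) := by
    ext i j
    simp only [Matrix.sub_apply, Matrix.add_apply, Matrix.mul_apply, Matrix.of_apply,
      hinv, Matrix.replicateCol_apply, Matrix.replicateRow_apply, Fin.sum_univ_one, mul_one]
    rw [sum_helper A⁻¹ q p, ← hsA]
    ring
  rw [key]; erw [Matrix.det_add_replicateCol_mul_replicateRow (ι := Fin 1) hB (fun _ => -(p * q * sA)) (fun _ => (1 : ℝ))]
  simp only [Matrix.det_unique]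
  have hval : ((Matrix.replicateRow (Fin 1) (fun _ => (1 : ℝ)) : Matrix (Fin 1) (Fin n) ℝ) * B⁻¹ *
      (Matrix.replicateCol (Fin 1) (fun _ => -(p * q * sA)) : Matrix (Fin n) (Fin 1) ℝ)) default default
      = -(p * q * sA) * sB := by
    simp only [Matrix.mul_apply, Matrix.replicateRow_apply, Matrix.replicateCol_apply, Fin.sum_univ_one]
    rw [sum_helper B⁻¹ 1 (-(p * q * sA)), ← hsB]
    ring
  have hadjA : ∑ i, ∑ j, A.adjugate i j = A.det * sA := by
    rw [hsA, Finset.mul_sum]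
    refine Finset.sum_congr rfl fun i _ => ?_
    rw [Finset.mul_sum]
    refine Finset.sum_congr rfl fun j _ => ?_
    rw [Matrix.inv_def, Matrix.smul_apply, smul_eq_mul, ← mul_assoc,
      Ring.mul_inverse_cancel _ hA, one_mul]
  have hadjB : ∑ i, ∑ j, B.adjugate i j = B.det * sB := by
    rw [hsB, Finset.mul_sum]
    refine Finset.sum_congr rfl fun i _ => ?_
    rw [Finset.mul_sum]
    refine Finset.sum_congr rfl fun j _ => ?_
    rw [Matrix.inv_def, Matrix.smul_apply, smul_eq_mul, ← mul_assoc,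
      Ring.mul_inverse_cancel _ hB, one_mul]
  rw [hadjA, hadjB]
  simp only [Matrix.add_apply, Matrix.one_apply_eq, hval]
  ring
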